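/- For τ ∈ (0,1), the derivative with respect to τ of det(R_τ) equals −2τ·det(R_τ)·∑ᵢ λᵢ/(1 − τ²λᵢ), where R_τ has diagonal blocks R₁₁, R₂₂ and off-diagonal blocks τR₁₂, τR₂₁, and λᵢ are the eigenvalues of R₁₁^{−1/2} R₁₂ R₂₂^{−1} R₂₁ R₁₁^{−1/2}. In particular, if R₁₂ ≠ 0 then det(R_τ) is strictly decreasing in τ on (0,1). -/

import Mathlib

open Matrix

/-- The square root of a positive semidefinite matrix, with its definition from the older Mathlib
(removed since). -/
noncomputable def Matrix.PosSemidef.sqrt {n 𝕜 : Type*} [Fintype n] [DecidableEq n] [RCLike 𝕜] [PartialOrder 𝕜]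
    {A : Matrix n n 𝕜} (hA : A.PosSemidef) : Matrix n n 𝕜 :=
  hA.1.eigenvectorUnitary.1 * diagonal ((↑) ∘ (√·) ∘ hA.1.eigenvalues) *
    (star hA.1.eigenvectorUnitary : Matrix n n 𝕜)

lemma Matrix.PosSemidef.sqrt_mul_self {n : Type*} [Fintype n] [DecidableEq n]
    {A : Matrix n n ℝ} (hA : A.PosSemidef) : hA.sqrt * hA.sqrt = A := by
  unfold Matrix.PosSemidef.sqrt
  have hUU : star (hA.1.eigenvectorUnitary : Matrix n n ℝ) * hA.1.eigenvectorUnitary = 1 :=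
    mem_unitaryGroup_iff'.mp hA.1.eigenvectorUnitary.2
  have hD : A = (hA.1.eigenvectorUnitary : Matrix n n ℝ) * diagonal hA.1.eigenvalues *
      star (hA.1.eigenvectorUnitary : Matrix n n ℝ) := by
    simpa using hA.1.spectral_theorem
  have hdd : diagonal ((RCLike.ofReal ∘ (√·) ∘ hA.1.eigenvalues) : n → ℝ) *
      diagonal ((RCLike.ofReal ∘ (√·) ∘ hA.1.eigenvalues) : n → ℝ) = diagonal hA.1.eigenvalues := by
    rw [diagonal_mul_diagonal]
    congr 1
    funext i
    simp [Real.mul_self_sqrt (hA.eigenvalues_nonneg i)]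
  calc _ = (hA.1.eigenvectorUnitary : Matrix n n ℝ) *
        (diagonal ((RCLike.ofReal ∘ (√·) ∘ hA.1.eigenvalues) : n → ℝ) *
          (star (hA.1.eigenvectorUnitary : Matrix n n ℝ) * hA.1.eigenvectorUnitary) *
          diagonal ((RCLike.ofReal ∘ (√·) ∘ hA.1.eigenvalues) : n → ℝ)) *
        star (hA.1.eigenvectorUnitary : Matrix n n ℝ) := by simp only [Matrix.mul_assoc]
    _ = A := by rw [hUU, Matrix.mul_one, hdd, ← hD]

lemma Matrix.PosSemidef.posSemidef_sqrt {n : Type*} [Fintype n] [DecidableEq n]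
    {A : Matrix n n ℝ} (hA : A.PosSemidef) : hA.sqrt.PosSemidef := by
  unfold Matrix.PosSemidef.sqrt
  exact (PosSemidef.diagonal (by intro i; simp [Real.sqrt_nonneg])).mul_mul_conjTranspose_same _

lemma aux_det_one_sub_smul {n : ℕ} {M : Matrix (Fin n) (Fin n) ℝ} (hM : M.IsHermitian) (c : ℝ) :
    (1 - c • M).det = ∏ i, (1 - c * hM.eigenvalues i) := by
  set U : Matrix (Fin n) (Fin n) ℝ := (hM.eigenvectorUnitary : Matrix (Fin n) (Fin n) ℝ) with hU
  have hUU : U * star U = 1 := mem_unitaryGroup_iff.mp hM.eigenvectorUnitary.2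
  have hD : M = U * diagonal hM.eigenvalues * star U := by
    have := hM.spectral_theorem
    simpa using this
  have h1 : (1 - c • M) = U * diagonal (fun i => 1 - c * hM.eigenvalues i) * star U := by
    have : diagonal (fun i => 1 - c * hM.eigenvalues i)
        = 1 - c • diagonal hM.eigenvalues := by
      rw [← diagonal_one, ← diagonal_smul, ← diagonal_sub]
      rfl
    rw [this, Matrix.mul_sub, Matrix.sub_mul, Matrix.mul_one, hUU,
      Matrix.mul_smul, Matrix.smul_mul, ← hD]
  rw [h1, det_mul_right_comm, hUU, Matrix.one_mul, det_diagonal]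

lemma aux_det_blocks {n₁ n₂ : ℕ}
    (R11 : Matrix (Fin n₁) (Fin n₁) ℝ) (R12 : Matrix (Fin n₁) (Fin n₂) ℝ)
    (R22 : Matrix (Fin n₂) (Fin n₂) ℝ)
    (hR11 : R11.PosDef) (hR22 : R22.PosDef)
    (M : Matrix (Fin n₁) (Fin n₁) ℝ)
    (hMdef : M = hR11.posSemidef.sqrt⁻¹ * R12 * R22⁻¹ * R12ᵀ * hR11.posSemidef.sqrt⁻¹)
    (hM : M.IsHermitian) (t : ℝ) :
    (Matrix.fromBlocks R11 (t • R12) (t • R12ᵀ) R22).det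
      = R11.det * R22.det * ∏ i, (1 - t ^ 2 * hM.eigenvalues i) := by
  set S := hR11.posSemidef.sqrt with hS
  have hSS : S * S = R11 := hR11.posSemidef.sqrt_mul_self
  have hSinvinv : S⁻¹ * S⁻¹ = R11⁻¹ := by rw [← hSS, Matrix.mul_inv_rev]
  haveI : Invertible R11 := hR11.isUnit.invertible
  rw [det_fromBlocks₁₁, invOf_eq_nonsing_inv]
  have h2 : (t • R12ᵀ) * R11⁻¹ * (t • R12) = t ^ 2 • (R12ᵀ * R11⁻¹ * R12) := by
    rw [Matrix.smul_mul, Matrix.smul_mul, Matrix.mul_smul, smul_smul, sq]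
  rw [h2]
  have h3 : R22 - t ^ 2 • (R12ᵀ * R11⁻¹ * R12)
      = R22 * (1 - t ^ 2 • (R22⁻¹ * (R12ᵀ * R11⁻¹ * R12))) := by
    rw [Matrix.mul_sub, Matrix.mul_one, Matrix.mul_smul,
      Matrix.mul_nonsing_inv_cancel_left _ _ (hR22.det_pos.ne'.isUnit)]
  rw [h3, det_mul]
  have h4 : t ^ 2 • (R22⁻¹ * (R12ᵀ * R11⁻¹ * R12))
      = (R22⁻¹ * R12ᵀ * S⁻¹) * (t ^ 2 • (S⁻¹ * R12)) := by
    rw [Matrix.mul_smul]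
    congr 1
    rw [← hSinvinv]
    simp only [Matrix.mul_assoc]
  have h5 : (t ^ 2 • (S⁻¹ * R12)) * (R22⁻¹ * R12ᵀ * S⁻¹) = t ^ 2 • M := by
    rw [Matrix.smul_mul, hMdef]
    congr 1
    simp only [Matrix.mul_assoc]
  rw [h4, det_one_sub_mul_comm, h5, aux_det_one_sub_smul hM, mul_assoc]

-- conjugation preserves PosDef
lemma aux_posdef_conj {m : ℕ} {A B : Matrix (Fin m) (Fin m) ℝ} (hA : A.PosDef)
    (hB : IsUnit B.det) : (B * A * Bᴴ).PosDef := by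
  refine posDef_iff_dotProduct_mulVec.mpr ⟨?_, ?_⟩
  · have : (B * A * Bᴴ)ᴴ = B * A * Bᴴ := by
      simp [conjTranspose_mul, Matrix.mul_assoc, ← conjTranspose_eq_transpose_of_trivial, hA.1.eq]
    exact this
  · intro x hx
    have hz : Bᴴ *ᵥ x ≠ 0 := by
      intro h0
      have hBH : IsUnit (Bᴴ).det := by
        rw [det_conjTranspose]
        exact hB.star
      exact hx ((mulVec_injective_iff_isUnit.mpr (isUnit_iff_isUnit_det _ |>.2 hBH)).eq_iff.mp
        (by simp [← conjTranspose_eq_transpose_of_trivial, h0]))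
    have := hA.dotProduct_mulVec_pos hz
    have heq : star x ⬝ᵥ (B * A * Bᴴ) *ᵥ x
        = star (Bᴴ *ᵥ x) ⬝ᵥ A *ᵥ (Bᴴ *ᵥ x) := by
      rw [star_mulVec, conjTranspose_conjTranspose]
      rw [← mulVec_mulVec, ← mulVec_mulVec, dotProduct_mulVec]
    rw [heq]
    exact this

open scoped Matrix in
lemma aux_schur_posdef {n₁ n₂ : ℕ}
    {R11 : Matrix (Fin n₁) (Fin n₁) ℝ} {R12 : Matrix (Fin n₁) (Fin n₂) ℝ}
    {R22 : Matrix (Fin n₂) (Fin n₂) ℝ}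
    (hR : (Matrix.fromBlocks R11 R12 R12ᵀ R22).PosDef) (hR22 : R22.PosDef) :
    (R11 - R12 * R22⁻¹ * R12ᵀ).PosDef := by
  haveI : Invertible R22 := hR22.isUnit.invertible
  have hT : R12ᵀ = R12ᴴ := (conjTranspose_eq_transpose_of_trivial R12).symm
  rw [hT] at hR ⊢
  refine posDef_iff_dotProduct_mulVec.mpr ⟨?_, ?_⟩
  · exact (IsHermitian.fromBlocks₂₂ R11 R12 hR22.1).mp hR.1
  · intro x hx
    set y : Fin n₂ → ℝ := -((R22⁻¹ * R12ᴴ) *ᵥ x) with hy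
    have h := schur_complement_eq₂₂ R11 R12 x y (D := R22) hR22.1
    have hz : Sum.elim x y ≠ 0 := by
      intro h0
      apply hx
      funext i
      exact congrFun h0 (Sum.inl i)
    have hpos := hR.dotProduct_mulVec_pos hz
    rw [dotProduct_mulVec] at hpos
    rw [h] at hpos
    simp only [hy, add_neg_cancel] at hpos
    rw [dotProduct_mulVec]
    simpa [Matrix.diagonal_zero] using hpos

lemma aux_eigen {n₁ n₂ : ℕ}
    (R11 : Matrix (Fin n₁) (Fin n₁) ℝ) (R12 : Matrix (Fin n₁) (Fin n₂) ℝ)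
    (R22 : Matrix (Fin n₂) (Fin n₂) ℝ)
    (hR : (Matrix.fromBlocks R11 R12 R12ᵀ R22).PosDef)
    (hR11 : R11.PosDef) (hR22 : R22.PosDef)
    (M : Matrix (Fin n₁) (Fin n₁) ℝ)
    (hMdef : M = hR11.posSemidef.sqrt⁻¹ * R12 * R22⁻¹ * R12ᵀ * hR11.posSemidef.sqrt⁻¹)
    (hM : M.IsHermitian) :
    (∀ i, 0 ≤ hM.eigenvalues i) ∧ (∀ i, hM.eigenvalues i < 1)
      ∧ (R12 ≠ 0 → ∃ i, 0 < hM.eigenvalues i) := by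
  set S := hR11.posSemidef.sqrt with hS
  have hSS : S * S = R11 := hR11.posSemidef.sqrt_mul_self
  have hdS : IsUnit S.det := by
    have h1 : S.det * S.det = R11.det := by rw [← det_mul, hSS]
    exact isUnit_iff_ne_zero.mpr fun h0 => hR11.det_pos.ne' (by rw [← h1, h0, mul_zero])
  have hSh : S.IsHermitian := hR11.posSemidef.posSemidef_sqrt.1
  have hSinvH : (S⁻¹).IsHermitian := hSh.inv
  have hSinvT : (S⁻¹)ᵀ = S⁻¹ := by
    rw [← conjTranspose_eq_transpose_of_trivial]; exact hSinvH
  have hdSinv : IsUnit (S⁻¹).det :=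
    IsUnit.of_mul_eq_one _ (S.det_nonsing_inv_mul_det hdS)
  have hMpsd : M.PosSemidef := by
    have h := (hR22.inv.posSemidef).mul_mul_conjTranspose_same (S⁻¹ * R12)
    have heq : (S⁻¹ * R12) * R22⁻¹ * (S⁻¹ * R12)ᴴ = M := by
      rw [hMdef]
      simp [conjTranspose_mul, conjTranspose_eq_transpose_of_trivial, hSinvT,
        Matrix.mul_assoc]
    rwa [heq] at h
  have hnonneg : ∀ i, 0 ≤ hM.eigenvalues i := fun i => hMpsd.eigenvalues_nonneg i
  have hSchur := aux_schur_posdef hR hR22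
  have hOneSub : (1 - M).PosDef := by
    have hEq : (1 : Matrix (Fin n₁) (Fin n₁) ℝ) - M
        = S⁻¹ * (R11 - R12 * R22⁻¹ * R12ᵀ) * (S⁻¹)ᴴ := by
      rw [show (S⁻¹)ᴴ = S⁻¹ from hSinvH, Matrix.mul_sub, Matrix.sub_mul, hMdef]
      congr 1
      · rw [← hSS]
        simp only [Matrix.mul_assoc]
        rw [Matrix.mul_nonsing_inv _ hdS, Matrix.mul_one, Matrix.nonsing_inv_mul _ hdS]
      · simp only [Matrix.mul_assoc]
    rw [hEq]
    exact aux_posdef_conj hSchur hdSinv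
  have hlt1 : ∀ i, hM.eigenvalues i < 1 := by
    intro i
    set v : Fin n₁ → ℝ := ⇑(hM.eigenvectorBasis i) with hvdef
    have hv : M *ᵥ v = hM.eigenvalues i • v := hM.mulVec_eigenvectorBasis i
    have hv0 : v ≠ 0 := by
      intro h0
      apply hM.eigenvectorBasis.orthonormal.ne_zero i
      ext j
      exact congrFun h0 j
    have hsv : star v = v := funext fun j => star_trivial _
    have hp := hOneSub.dotProduct_mulVec_pos hv0
    rw [sub_mulVec, one_mulVec, hv, hsv, dotProduct_sub, dotProduct_smul] at hp
    have hvv : 0 < v ⬝ᵥ v := by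
      have := dotProduct_star_self_pos_iff (v := v)
      rw [hsv] at this
      exact this.mpr hv0
    have : 0 < v ⬝ᵥ v - hM.eigenvalues i * (v ⬝ᵥ v) := by
      simpa [smul_eq_mul] using hp
    nlinarith
  refine ⟨hnonneg, hlt1, fun hR12 => ?_⟩
  by_contra hcon
  push_neg at hcon
  have hzero : ∀ i, hM.eigenvalues i = 0 := fun i => le_antisymm (hcon i) (hnonneg i)
  have hM0 : M = 0 := by
    have h := hM.spectral_theorem
    rw [Unitary.conjStarAlgAut_apply] at h
    rw [show (RCLike.ofReal ∘ hM.eigenvalues : Fin n₁ → ℝ) = fun _ => 0 from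
      funext fun i => by simp [hzero i], diagonal_zero, Matrix.mul_zero,
      Matrix.zero_mul] at h
    exact h
  have hX0 : R12 * R22⁻¹ * R12ᵀ = 0 := by
    have h1 : R12 * R22⁻¹ * R12ᵀ = S * M * S := by
      rw [hMdef]
      rw [show S * (S⁻¹ * R12 * R22⁻¹ * R12ᵀ * S⁻¹) * S
          = (S * S⁻¹) * (R12 * R22⁻¹ * R12ᵀ * (S⁻¹ * S)) from by
        simp only [Matrix.mul_assoc]]
      rw [Matrix.mul_nonsing_inv _ hdS, Matrix.nonsing_inv_mul _ hdS, Matrix.one_mul,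
        Matrix.mul_one]
    rw [h1, hM0, Matrix.mul_zero, Matrix.zero_mul]
  apply hR12
  ext i j
  have hy0 : R12ᵀ *ᵥ Pi.single i 1 = 0 := by
    set x : Fin n₁ → ℝ := Pi.single i 1 with hx
    set y : Fin n₂ → ℝ := R12ᵀ *ᵥ x with hy
    by_contra hyne
    have hpos := hR22.inv.dotProduct_mulVec_pos hyne
    have hEq2 : star x ⬝ᵥ (R12 * R22⁻¹ * R12ᵀ) *ᵥ x = star y ⬝ᵥ R22⁻¹ *ᵥ y := by
      rw [hy, ← Matrix.mulVec_mulVec, ← Matrix.mulVec_mulVec, dotProduct_mulVec]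
      simp [star_mulVec, conjTranspose_eq_transpose_of_trivial, Matrix.mulVec_transpose]
    rw [hX0] at hEq2
    simp only [Matrix.zero_mulVec, dotProduct_zero] at hEq2
    rw [← hEq2] at hpos
    exact lt_irrefl _ hpos
  have := congrFun hy0 j
  simpa [Matrix.mulVec_single] using this

/-- For `τ ∈ (0,1)`, `d/dτ det R_τ = −2τ · det R_τ · ∑ᵢ λᵢ/(1 − τ²λᵢ)`, where the `λᵢ` are
the eigenvalues of `R₁₁^{-1/2} R₁₂ R₂₂⁻¹ R₂₁ R₁₁^{-1/2}`; if `R₁₂ ≠ 0` then `det R_τ`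
is strictly decreasing on `(0,1)`. -/
theorem stmt3 {n₁ n₂ : ℕ}
    (R11 : Matrix (Fin n₁) (Fin n₁) ℝ) (R12 : Matrix (Fin n₁) (Fin n₂) ℝ)
    (R22 : Matrix (Fin n₂) (Fin n₂) ℝ)
    (hR : (Matrix.fromBlocks R11 R12 R12ᵀ R22).PosDef)
    (hR11 : R11.PosDef) (hR22 : R22.PosDef)
    (M : Matrix (Fin n₁) (Fin n₁) ℝ)
    (hMdef : M = hR11.posSemidef.sqrt⁻¹ * R12 * R22⁻¹ * R12ᵀ * hR11.posSemidef.sqrt⁻¹)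
    (hM : M.IsHermitian) :
    (∀ τ ∈ Set.Ioo (0:ℝ) 1,
      HasDerivAt (fun t : ℝ => (Matrix.fromBlocks R11 (t • R12) (t • R12ᵀ) R22).det)
        (-(2 * τ * (Matrix.fromBlocks R11 (τ • R12) (τ • R12ᵀ) R22).det *
          ∑ i, hM.eigenvalues i / (1 - τ ^ 2 * hM.eigenvalues i))) τ) ∧
    (R12 ≠ 0 →
      StrictAntiOn (fun t : ℝ => (Matrix.fromBlocks R11 (t • R12) (t • R12ᵀ) R22).det)
        (Set.Ioo (0:ℝ) 1)) := by
  obtain ⟨hnn, hlt, hex⟩ := aux_eigen R11 R12 R22 hR hR11 hR22 M hMdef hM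
  have hdetid : ∀ t : ℝ, (Matrix.fromBlocks R11 (t • R12) (t • R12ᵀ) R22).det
      = R11.det * R22.det * ∏ i, (1 - t ^ 2 * hM.eigenvalues i) :=
    aux_det_blocks R11 R12 R22 hR11 hR22 M hMdef hM
  have hc : 0 < R11.det * R22.det := mul_pos hR11.det_pos hR22.det_pos
  have hdpos : ∀ x ∈ Set.Ioo (0:ℝ) 1, ∀ i, 0 < 1 - x ^ 2 * hM.eigenvalues i := by
    intro x hx i
    have hx2 : x ^ 2 ≤ 1 := by nlinarith [hx.1, hx.2]
    have : x ^ 2 * hM.eigenvalues i ≤ 1 * hM.eigenvalues i :=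
      mul_le_mul_of_nonneg_right hx2 (hnn i)
    nlinarith [hlt i]
  have hfa : ∀ τ ∈ Set.Ioo (0:ℝ) 1,
      HasDerivAt (fun t : ℝ => (Matrix.fromBlocks R11 (t • R12) (t • R12ᵀ) R22).det)
        (-(2 * τ * (Matrix.fromBlocks R11 (τ • R12) (τ • R12ᵀ) R22).det *
          ∑ i, hM.eigenvalues i / (1 - τ ^ 2 * hM.eigenvalues i))) τ := by
    intro τ hτ
    have hgi : ∀ i : Fin n₁, HasDerivAt (fun t : ℝ => 1 - t ^ 2 * hM.eigenvalues i)
        (-(2 * τ * hM.eigenvalues i)) τ := by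
      intro i
      have h := ((hasDerivAt_pow 2 τ).mul_const (hM.eigenvalues i)).const_sub 1
      simpa using h
    have hprod := HasDerivAt.finset_prod (u := Finset.univ) (fun i _ => hgi i)
    have hD := hprod.const_mul (R11.det * R22.det)
    have hfun : (fun t : ℝ => (Matrix.fromBlocks R11 (t • R12) (t • R12ᵀ) R22).det)
        = fun t : ℝ => R11.det * R22.det * ∏ i, (1 - t ^ 2 * hM.eigenvalues i) :=
      funext hdetid
    rw [hfun]
    convert hD using 1
    · rfl
    · rfl
    · funext t
      rw [Finset.prod_apply]
    rw [hdetid τ]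
    have key : ∀ i : Fin n₁, hM.eigenvalues i / (1 - τ ^ 2 * hM.eigenvalues i)
          * ∏ j, (1 - τ ^ 2 * hM.eigenvalues j)
        = hM.eigenvalues i * ∏ j ∈ Finset.univ.erase i, (1 - τ ^ 2 * hM.eigenvalues j) := by
      intro i
      rw [← Finset.mul_prod_erase Finset.univ _ (Finset.mem_univ i)]
      have hne := (hdpos τ hτ i).ne'
      rw [← mul_assoc, div_mul_cancel₀ _ hne]
    rw [Finset.mul_sum, Finset.mul_sum, ← Finset.sum_neg_distrib]
    refine Finset.sum_congr rfl fun i _ => ?_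
    rw [smul_eq_mul]
    linear_combination (-(2 * τ * (R11.det * R22.det))) * key i
  refine ⟨hfa, fun h12 => ?_⟩
  obtain ⟨i0, hi0⟩ := hex h12
  apply strictAntiOn_of_deriv_neg (convex_Ioo 0 1)
  · have hcont : Continuous
        (fun t : ℝ => R11.det * R22.det * ∏ i, (1 - t ^ 2 * hM.eigenvalues i)) := by
      apply continuous_const.mul
      apply continuous_finset_prod
      intro i _
      exact continuous_const.sub ((continuous_pow 2).mul continuous_const)
    have hfun : (fun t : ℝ => (Matrix.fromBlocks R11 (t • R12) (t • R12ᵀ) R22).det)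
        = fun t : ℝ => R11.det * R22.det * ∏ i, (1 - t ^ 2 * hM.eigenvalues i) :=
      funext hdetid
    rw [hfun]
    exact hcont.continuousOn
  · intro x hx
    rw [interior_Ioo] at hx
    rw [(hfa x hx).deriv]
    have hdet : 0 < (Matrix.fromBlocks R11 (x • R12) (x • R12ᵀ) R22).det := by
      rw [hdetid x]
      exact mul_pos hc (Finset.prod_pos fun i _ => hdpos x hx i)
    have hsum : 0 < ∑ i, hM.eigenvalues i / (1 - x ^ 2 * hM.eigenvalues i) := by
      refine Finset.sum_pos' (fun i _ => div_nonneg (hnn i) (hdpos x hx i).le)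
        ⟨i0, Finset.mem_univ _, div_pos hi0 (hdpos x hx i0)⟩
    have : 0 < 2 * x * (Matrix.fromBlocks R11 (x • R12) (x • R12ᵀ) R22).det *
        ∑ i, hM.eigenvalues i / (1 - x ^ 2 * hM.eigenvalues i) :=
      mul_pos (mul_pos (mul_pos two_pos hx.1) hdet) hsum
    linarith
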